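/- Define K(v) = −Σ_i μ_i min_{j∈J} (c_{ij} − v_j) for v ∈ ℝ^J, with μ a probability vector on finite I and c ∈ ℝ^{I×J}. Then K is convex and Lipschitz on ℝ^J, and its Legendre–Fenchel conjugate K* satisfies K*(ν) = MK(ν) if ν is a probability vector on J and K*(ν) = +∞ otherwise. -/

import Mathlib

open Finset Pointwise

section AuxKant

variable {I J : Type*} [Fintype I] [Fintype J] [Nonempty I] [Nonempty J]

lemma aux_inf'_le_add (f g : J → ℝ) (d : ℝ) (h : ∀ j, f j ≤ g j + d) :
    univ.inf' univ_nonempty f ≤ univ.inf' univ_nonempty g + d := by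
  obtain ⟨j0, -, hj0⟩ := Finset.exists_mem_eq_inf' univ_nonempty g
  calc univ.inf' univ_nonempty f ≤ f j0 := inf'_le _ (mem_univ j0)
  _ ≤ g j0 + d := h j0
  _ = _ := by rw [hj0]

lemma aux_inf'_sub_const (g : J → ℝ) (t : ℝ) :
    univ.inf' univ_nonempty (fun j => g j - t) = univ.inf' univ_nonempty g - t := by
  apply le_antisymm
  · rw [sub_eq_add_neg (univ.inf' univ_nonempty g)]
    exact aux_inf'_le_add _ _ _ (fun j => le_of_eq (by ring))
  · rw [sub_le_iff_le_add]
    exact aux_inf'_le_add _ _ _ (fun j => le_of_eq (by ring))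

variable {I J : Type*} [Fintype I] [Fintype J] [Nonempty I] [Nonempty J]

lemma aux_min_coupling' (μ : I → ℝ) (hμ0 : ∀ i, 0 ≤ μ i) (w : I → J → ℝ) :
    ∃ γ : I → J → ℝ, (∀ i j, 0 ≤ γ i j) ∧ (∀ i, ∑ j, γ i j = μ i) ∧
      ∑ i, ∑ j, w i j * γ i j = ∑ i, μ i * univ.inf' univ_nonempty (w i) := by
  have h : ∀ i : I, ∃ j ∈ univ, univ.inf' univ_nonempty (w i) = w i j :=
    fun i => Finset.exists_mem_eq_inf' univ_nonempty (w i)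
  choose j0 _ hj0 using h
  classical
  refine ⟨fun i j => if j = j0 i then μ i else 0, ?_, ?_, ?_⟩
  · intro i j; dsimp; split
    · exact hμ0 i
    · exact le_refl _
  · intro i; simp
  · refine Finset.sum_congr rfl fun i _ => ?_
    simp only [mul_ite, mul_zero, Finset.sum_ite_eq', mem_univ, if_true]
    rw [hj0 i]; ring

omit [Nonempty I] in
lemma aux_weak' (μ : I → ℝ) (c : I → J → ℝ) (v ν : J → ℝ) (γ : I → J → ℝ)
    (hγ0 : ∀ i j, 0 ≤ γ i j) (hrow : ∀ i, ∑ j, γ i j = μ i)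
    (hcol : ∀ j, ∑ i, γ i j = ν j) :
    (∑ j, v j * ν j) + ∑ i, μ i * univ.inf' univ_nonempty (fun j => c i j - v j)
      ≤ ∑ i, ∑ j, c i j * γ i j := by
  have h1 : ∀ i ∈ univ, μ i * univ.inf' univ_nonempty (fun j => c i j - v j)
      ≤ ∑ j, γ i j * (c i j - v j) := by
    intro i _
    rw [← hrow i, Finset.sum_mul]
    refine Finset.sum_le_sum fun j _ => ?_
    exact mul_le_mul_of_nonneg_left (inf'_le _ (mem_univ j)) (hγ0 i j)
  have h2 : ∑ j, v j * ν j = ∑ i, ∑ j, γ i j * v j := by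
    rw [Finset.sum_comm]
    refine Finset.sum_congr rfl fun j _ => ?_
    rw [← hcol j, Finset.mul_sum]
    exact Finset.sum_congr rfl fun i _ => mul_comm _ _
  have h3 : ∑ i, ∑ j, γ i j * c i j = ∑ i, ∑ j, c i j * γ i j :=
    Finset.sum_congr rfl fun i _ => Finset.sum_congr rfl fun j _ => mul_comm _ _
  have h4 := Finset.sum_le_sum h1
  simp only [mul_sub, Finset.sum_sub_distrib] at h4
  linarith [h4]

lemma aux_kantorovich (μ : I → ℝ) (hμ0 : ∀ i, 0 ≤ μ i) (hμ1 : ∑ i, μ i = 1)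
    (c : I → J → ℝ) (ν : J → ℝ) (hν0 : ∀ j, 0 ≤ ν j) (hν1 : ∑ j, ν j = 1) :
    sSup {x : ℝ | ∃ v : J → ℝ, x = (∑ j, v j * ν j)
        + ∑ i, μ i * univ.inf' univ_nonempty (fun j => c i j - v j)}
      = sInf ((fun γ : I → J → ℝ => ∑ i, ∑ j, c i j * γ i j) ''
        {γ | (∀ i j, 0 ≤ γ i j) ∧ (∀ i, ∑ j, γ i j = μ i) ∧ (∀ j, ∑ i, γ i j = ν j)}) := by
  classical
  set S := {x : ℝ | ∃ v : J → ℝ, x = (∑ j, v j * ν j)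
      + ∑ i, μ i * univ.inf' univ_nonempty (fun j => c i j - v j)} with hSdef
  set Φ := (fun γ : I → J → ℝ => ∑ i, ∑ j, c i j * γ i j) ''
      {γ | (∀ i j, 0 ≤ γ i j) ∧ (∀ i, ∑ j, γ i j = μ i) ∧ (∀ j, ∑ i, γ i j = ν j)} with hΦdef
  -- the product coupling
  have hprod : (fun i j => μ i * ν j) ∈
      {γ : I → J → ℝ | (∀ i j, 0 ≤ γ i j) ∧ (∀ i, ∑ j, γ i j = μ i) ∧ (∀ j, ∑ i, γ i j = ν j)} := by
    refine ⟨fun i j => mul_nonneg (hμ0 i) (hν0 j), fun i => ?_, fun j => ?_⟩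
    · rw [← Finset.mul_sum, hν1, mul_one]
    · rw [← Finset.sum_mul, hμ1, one_mul]
  have hΦne : Φ.Nonempty := ⟨_, ⟨_, hprod, rfl⟩⟩
  have hSne : S.Nonempty := ⟨_, ⟨0, rfl⟩⟩
  -- weak duality
  have hweak : ∀ x ∈ S, ∀ y ∈ Φ, x ≤ y := by
    rintro x ⟨v, rfl⟩ y ⟨γ, ⟨hγ0, hrow, hcol⟩, rfl⟩
    exact aux_weak' μ c v ν γ hγ0 hrow hcol
  have hSbdd : BddAbove S := by
    obtain ⟨y, hy⟩ := hΦne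
    exact ⟨y, fun x hx => hweak x hx y hy⟩
  have hΦbdd : BddBelow Φ := by
    obtain ⟨x, hx⟩ := hSne
    exact ⟨x, fun y hy => hweak x hx y hy⟩
  refine le_antisymm ?_ ?_
  · exact csSup_le hSne fun x hx => le_csInf hΦne fun y hy => hweak x hx y hy
  -- strong duality
  refine le_of_forall_pos_le_add fun ε hε => ?_
  -- the feasible polytope with only row constraints
  set P := {γ : I → J → ℝ | (∀ i j, 0 ≤ γ i j) ∧ ∀ i, ∑ j, γ i j = μ i} with hPdef
  -- the linear map γ ↦ (column sums, cost)
  set Tl : (I → J → ℝ) →ₗ[ℝ] (J → ℝ) × ℝ :=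
    { toFun := fun γ => (fun j => ∑ i, γ i j, ∑ i, ∑ j, c i j * γ i j)
      map_add' := fun γ δ => by
        refine Prod.ext ?_ ?_
        · funext j
          simp [Finset.sum_add_distrib]
        · simp [Finset.sum_add_distrib, mul_add]
      map_smul' := fun r γ => by
        refine Prod.ext ?_ ?_
        · funext j
          simp [Finset.mul_sum]
        · simp only [Pi.smul_apply, smul_eq_mul, RingHom.id_apply, Prod.smul_mk, Prod.snd]
          rw [Finset.mul_sum]
          refine Finset.sum_congr rfl fun i _ => ?_
          rw [Finset.mul_sum]
          exact Finset.sum_congr rfl fun j _ => by ring } with hTl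
  set Q := {p : (J → ℝ) × ℝ | p.1 = 0 ∧ 0 ≤ p.2} with hQdef
  set E := (⇑Tl '' P) + Q with hEdef
  -- P is compact
  have hPclosed : IsClosed P := by
    have h1 : IsClosed {γ : I → J → ℝ | ∀ i j, 0 ≤ γ i j} := by
      have : {γ : I → J → ℝ | ∀ i j, 0 ≤ γ i j} = ⋂ i, ⋂ j, {γ : I → J → ℝ | 0 ≤ γ i j} := by
        ext γ; simp
      rw [this]
      exact isClosed_iInter fun i => isClosed_iInter fun j =>
        isClosed_le continuous_const ((continuous_apply j).comp (continuous_apply i))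
    have h2 : IsClosed {γ : I → J → ℝ | ∀ i, ∑ j, γ i j = μ i} := by
      have : {γ : I → J → ℝ | ∀ i, ∑ j, γ i j = μ i}
          = ⋂ i, {γ : I → J → ℝ | ∑ j, γ i j = μ i} := by ext γ; simp
      rw [this]
      exact isClosed_iInter fun i => isClosed_eq
        (continuous_finset_sum _ fun j _ => (continuous_apply j).comp (continuous_apply i))
        continuous_const
    have : P = {γ : I → J → ℝ | ∀ i j, 0 ≤ γ i j} ∩ {γ | ∀ i, ∑ j, γ i j = μ i} := by
      ext γ; simp [hPdef, Set.mem_setOf_eq, and_comm]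
    rw [this]; exact h1.inter h2
  have hPsub : P ⊆ Set.Icc (0 : I → J → ℝ) 1 := by
    rintro γ ⟨h0, hr⟩
    constructor
    · intro i; intro j; exact h0 i j
    · intro i; intro j
      have h1 : γ i j ≤ ∑ j', γ i j' :=
        Finset.single_le_sum (fun j' _ => h0 i j') (mem_univ j)
      have h2 : μ i ≤ ∑ i', μ i' :=
        Finset.single_le_sum (fun i' _ => hμ0 i') (mem_univ i)
      have : (1 : I → J → ℝ) i j = 1 := rfl
      rw [this]
      rw [hr i] at h1
      linarith
  have hPcompact : IsCompact P :=
    IsCompact.of_isClosed_subset isCompact_Icc hPclosed hPsub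
  have hPconv : Convex ℝ P := by
    rintro γ ⟨hγ0, hγr⟩ δ ⟨hδ0, hδr⟩ a b ha hb hab
    constructor
    · intro i j
      simp only [Pi.add_apply, Pi.smul_apply, smul_eq_mul]
      exact add_nonneg (mul_nonneg ha (hγ0 i j)) (mul_nonneg hb (hδ0 i j))
    · intro i
      simp only [Pi.add_apply, Pi.smul_apply, smul_eq_mul]
      rw [Finset.sum_add_distrib, ← Finset.mul_sum, ← Finset.mul_sum, hγr i, hδr i]
      linear_combination μ i * hab
  -- Tl is continuous
  have hTcont : Continuous (⇑Tl) := by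
    refine Continuous.prodMk ?_ ?_
    · exact continuous_pi fun j => continuous_finset_sum _ fun i _ =>
        (continuous_apply j).comp (continuous_apply i)
    · exact continuous_finset_sum _ fun i _ => continuous_finset_sum _ fun j _ =>
        continuous_const.mul ((continuous_apply j).comp (continuous_apply i))
  have hQclosed : IsClosed Q := by
    have : Q = {p : (J → ℝ) × ℝ | p.1 = 0} ∩ {p : (J → ℝ) × ℝ | 0 ≤ p.2} := rfl
    rw [this]
    exact (isClosed_eq continuous_fst continuous_const).inter
      (isClosed_le continuous_const continuous_snd)
  have hQconv : Convex ℝ Q := by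
    rintro p ⟨hp1, hp2⟩ q ⟨hq1, hq2⟩ a b ha hb hab
    constructor
    · show a • p.1 + b • q.1 = 0
      rw [hp1, hq1, smul_zero, smul_zero, add_zero]
    · show (0:ℝ) ≤ a • p.2 + b • q.2
      exact add_nonneg (smul_nonneg ha hp2) (smul_nonneg hb hq2)
  have hEclosed : IsClosed E := hQclosed.add_left_of_isCompact (hPcompact.image hTcont)
  have hEconv : Convex ℝ E := ((hPconv.linear_image Tl).add hQconv)
  -- membership criterion for E
  have hEmem : ∀ γ ∈ P, ∀ s : ℝ, 0 ≤ s → Tl γ + ((0 : J → ℝ), s) ∈ E := by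
    intro γ hγ s hs
    exact Set.add_mem_add (Set.mem_image_of_mem _ hγ) ⟨rfl, hs⟩
  -- the point to separate
  have hnotmem : ((ν, sInf Φ - ε) : (J → ℝ) × ℝ) ∉ E := by
    rintro ⟨p, ⟨γ, ⟨hγ0, hγr⟩, rfl⟩, q, ⟨hq1, hq2⟩, hpq⟩
    have hfst : (fun j => ∑ i, γ i j) + q.1 = ν := congrArg Prod.fst hpq
    have hsnd : (∑ i, ∑ j, c i j * γ i j) + q.2 = sInf Φ - ε := congrArg Prod.snd hpq
    rw [hq1, add_zero] at hfst
    have hcol : ∀ j, ∑ i, γ i j = ν j := fun j => congrFun hfst j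
    have hmem : (∑ i, ∑ j, c i j * γ i j) ∈ Φ := ⟨γ, ⟨hγ0, hγr, hcol⟩, rfl⟩
    have := csInf_le hΦbdd hmem
    linarith
  obtain ⟨f, u, hfu, hfE⟩ := geometric_hahn_banach_point_closed hEconv hEclosed hnotmem
  -- decompose f
  set β := f ((0 : J → ℝ), (1 : ℝ)) with hβdef
  set g : J → ℝ := fun j => f ((Pi.single j (1:ℝ) : J → ℝ), (0 : ℝ)) with hgdef
  have hdec : ∀ (ρ : J → ℝ) (t : ℝ), f (ρ, t) = (∑ j, ρ j * g j) + t * β := by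
    intro ρ t
    have h1 : ((ρ, t) : (J → ℝ) × ℝ)
        = (∑ j : J, ρ j • (((Pi.single j (1:ℝ) : J → ℝ), (0:ℝ)) : (J → ℝ) × ℝ))
          + t • (((0 : J → ℝ), (1:ℝ)) : (J → ℝ) × ℝ) := by
      refine Prod.ext ?_ ?_
      · simp only [Prod.fst_add, Prod.fst_sum, Prod.smul_fst, Prod.smul_snd, smul_zero]
        funext k
        simp [Finset.sum_apply, Pi.single_apply, mul_ite]
      · simp only [Prod.snd_add, Prod.snd_sum, Prod.smul_fst, Prod.smul_snd]
        simp
    rw [h1, map_add, map_sum, map_smul]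
    simp only [map_smul, smul_eq_mul]
    rfl
  set m := sInf Φ with hm
  -- the product coupling viewed in P
  set γ0 : I → J → ℝ := fun i j => μ i * ν j with hγ0def
  have hγ0P : γ0 ∈ P := ⟨hprod.1, hprod.2.1⟩
  set t0 := ∑ i, ∑ j, c i j * γ0 i j with ht0
  have hTγ0 : (Tl γ0 : (J → ℝ) × ℝ) = (ν, t0) := by
    refine Prod.ext ?_ ?_
    · funext j; exact hprod.2.2 j
    · rfl
  have hνβ : ∀ s : ℝ, 0 ≤ s → u < (∑ j, ν j * g j) + (t0 + s) * β := by
    intro s hs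
    have h := hfE _ (hEmem γ0 hγ0P s hs)
    rw [hTγ0] at h
    have hpt : ((ν, t0) : (J → ℝ) × ℝ) + ((0 : J → ℝ), s) = (ν, t0 + s) := by
      refine Prod.ext ?_ ?_ <;> simp
    rw [hpt, hdec] at h
    exact h
  have hβpos : 0 < β := by
    rcases lt_trichotomy β 0 with h | h | h
    · exfalso
      set s := max 0 ((u - (∑ j, ν j * g j)) / β - t0) with hs
      have hs0 : 0 ≤ s := le_max_left _ _
      have h2 : (u - (∑ j, ν j * g j)) / β - t0 ≤ s := le_max_right _ _
      have h4 : (u - (∑ j, ν j * g j)) / β ≤ t0 + s := by linarith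
      have h3 : (t0 + s) * β ≤ u - (∑ j, ν j * g j) :=
        calc (t0 + s) * β ≤ ((u - (∑ j, ν j * g j)) / β) * β :=
              mul_le_mul_of_nonpos_right h4 (le_of_lt h)
        _ = u - (∑ j, ν j * g j) := div_mul_cancel₀ _ (ne_of_lt h)
      have := hνβ s hs0
      linarith
    · exfalso
      have h1 := hνβ 0 le_rfl
      have h2 := hfu
      rw [hdec] at h2
      rw [h] at h1 h2
      simp only [mul_zero, add_zero] at h1 h2
      linarith
    · exact h
  set v : J → ℝ := fun j => -(g j) / β with hvdef
  have hgv : ∀ j, g j = -(β * v j) := by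
    intro j
    rw [hvdef]
    field_simp
  obtain ⟨γs, hγs0, hγsr, hγscost⟩ := aux_min_coupling' μ hμ0 (fun i j => c i j - v j)
  beta_reduce at hγscost
  have hγsP : γs ∈ P := ⟨hγs0, hγsr⟩
  set D := ∑ i, μ i * univ.inf' univ_nonempty (fun j => c i j - v j) with hD
  set Sv := ∑ j, v j * ν j with hSv
  have hfTγs := hfE (Tl γs) (by have h := hEmem γs hγsP 0 le_rfl; rwa [Prod.mk_zero_zero, add_zero] at h)
  have hTγs : (Tl γs : (J → ℝ) × ℝ) = (fun j => ∑ i, γs i j, ∑ i, ∑ j, c i j * γs i j) := rfl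
  rw [hTγs, hdec] at hfTγs
  set Cst := ∑ i, ∑ j, c i j * γs i j with hCst
  set W := ∑ j, v j * (∑ i, γs i j) with hW
  have e1 : ∑ j, (∑ i, γs i j) * g j = -(β * W) := by
    rw [hW, Finset.mul_sum, ← Finset.sum_neg_distrib]
    refine Finset.sum_congr rfl fun j _ => ?_
    rw [hgv j]; ring
  have e2 : D = Cst - W := by
    rw [← hγscost, hCst, hW]
    have e2a : ∑ j, v j * ∑ i, γs i j = ∑ i, ∑ j, v j * γs i j := by
      rw [Finset.sum_comm]
      exact Finset.sum_congr rfl fun j _ => Finset.mul_sum _ _ _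
    rw [e2a, ← Finset.sum_sub_distrib]
    refine Finset.sum_congr rfl fun i _ => ?_
    rw [← Finset.sum_sub_distrib]
    exact Finset.sum_congr rfl fun j _ => by ring
  have hub : u < β * D := by
    rw [e1] at hfTγs
    have e3 : -(β * W) + Cst * β = β * (Cst - W) := by ring
    rw [e3, ← e2] at hfTγs
    exact hfTγs
  have hlow : β * (m - ε - Sv) < u := by
    have h2 := hfu
    rw [hdec] at h2
    have e4 : ∑ j, ν j * g j = -(β * Sv) := by
      rw [hSv, Finset.mul_sum, ← Finset.sum_neg_distrib]
      refine Finset.sum_congr rfl fun j _ => ?_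
      rw [hgv j]; ring
    rw [e4] at h2
    have e5 : β * (m - ε - Sv) = -(β * Sv) + (m - ε) * β := by ring
    rw [e5]
    exact h2
  have hfin : m - ε - Sv < D := by
    have := hlow.trans hub
    exact (mul_lt_mul_iff_right₀ hβpos).mp this
  have hmemS : Sv + D ∈ S := by
    rw [hSdef]
    exact ⟨v, by rw [hSv, hD]⟩
  have hle := le_csSup hSbdd hmemS
  linarith

end AuxKant

theorem K_convex_lipschitz_conjugate
    {I J : Type*} [Fintype I] [Fintype J] [Nonempty I] [Nonempty J]
    (μ : I → ℝ) (hμ0 : ∀ i, 0 ≤ μ i) (hμ1 : ∑ i, μ i = 1)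
    (c : I → J → ℝ)
    (K : (J → ℝ) → ℝ)
    (hK : ∀ v, K v = -∑ i, μ i *
      Finset.univ.inf' Finset.univ_nonempty (fun j => c i j - v j))
    (MK : (J → ℝ) → ℝ)
    (hMK : ∀ ν, MK ν = sInf ((fun γ : I → J → ℝ => ∑ i, ∑ j, c i j * γ i j) ''
      {γ | (∀ i j, 0 ≤ γ i j) ∧ (∀ i, ∑ j, γ i j = μ i) ∧ (∀ j, ∑ i, γ i j = ν j)})) :
    ConvexOn ℝ Set.univ K ∧
    (∃ L : NNReal, LipschitzWith L K) ∧
    (∀ ν : J → ℝ, (∀ j, 0 ≤ ν j) → ∑ j, ν j = 1 →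
      sSup {x : ℝ | ∃ v : J → ℝ, x = (∑ j, v j * ν j) - K v} = MK ν) ∧
    (∀ ν : J → ℝ, ¬ ((∀ j, 0 ≤ ν j) ∧ ∑ j, ν j = 1) →
      ¬ BddAbove {x : ℝ | ∃ v : J → ℝ, x = (∑ j, v j * ν j) - K v}) := by
  refine ⟨?_, ?_, ?_, ?_⟩
  · -- convexity
    refine ⟨convex_univ, ?_⟩
    intro v _ w _ a b ha hb hab
    simp only [hK, smul_eq_mul]
    have key : ∀ i ∈ univ,
        μ i * (a * univ.inf' univ_nonempty (fun j => c i j - v j)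
          + b * univ.inf' univ_nonempty (fun j => c i j - w j))
        ≤ μ i * univ.inf' univ_nonempty (fun j => c i j - (a • v + b • w) j) := by
      intro i _
      refine mul_le_mul_of_nonneg_left ?_ (hμ0 i)
      refine Finset.le_inf' _ _ fun j _ => ?_
      have h1 : a * univ.inf' univ_nonempty (fun j => c i j - v j) ≤ a * (c i j - v j) :=
        mul_le_mul_of_nonneg_left (inf'_le _ (mem_univ j)) ha
      have h2 : b * univ.inf' univ_nonempty (fun j => c i j - w j) ≤ b * (c i j - w j) :=
        mul_le_mul_of_nonneg_left (inf'_le _ (mem_univ j)) hb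
      have h3 : a * (c i j - v j) + b * (c i j - w j) = c i j - (a • v + b • w) j := by
        simp only [Pi.add_apply, Pi.smul_apply, smul_eq_mul]
        linear_combination (c i j) * hab
      linarith
    have hkey := Finset.sum_le_sum key
    have e1 : ∑ i, μ i * (a * univ.inf' univ_nonempty (fun j => c i j - v j)
          + b * univ.inf' univ_nonempty (fun j => c i j - w j))
        = a * (∑ i, μ i * univ.inf' univ_nonempty (fun j => c i j - v j))
          + b * (∑ i, μ i * univ.inf' univ_nonempty (fun j => c i j - w j)) := by
      rw [Finset.mul_sum, Finset.mul_sum, ← Finset.sum_add_distrib]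
      exact Finset.sum_congr rfl fun i _ => by ring
    have e2 : a * -(∑ i, μ i * univ.inf' univ_nonempty (fun j => c i j - v j))
          + b * -(∑ i, μ i * univ.inf' univ_nonempty (fun j => c i j - w j))
        = -(a * (∑ i, μ i * univ.inf' univ_nonempty (fun j => c i j - v j))
          + b * (∑ i, μ i * univ.inf' univ_nonempty (fun j => c i j - w j))) := by ring
    rw [e2, neg_le_neg_iff]
    linarith [hkey, e1]
  · -- Lipschitz
    refine ⟨1, LipschitzWith.of_dist_le_mul fun v w => ?_⟩
    rw [NNReal.coe_one, one_mul, Real.dist_eq]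
    have hb : ∀ u u' : J → ℝ, ∀ i,
        univ.inf' univ_nonempty (fun j => c i j - u j)
          ≤ univ.inf' univ_nonempty (fun j => c i j - u' j) + dist u' u := by
      intro u u' i
      refine aux_inf'_le_add _ _ _ fun j => ?_
      have : dist (u' j) (u j) ≤ dist u' u := dist_le_pi_dist u' u j
      rw [Real.dist_eq] at this
      have := abs_le.mp this
      linarith [this.1, this.2]
    have habs : ∀ i, |univ.inf' univ_nonempty (fun j => c i j - w j)
        - univ.inf' univ_nonempty (fun j => c i j - v j)| ≤ dist v w := by
      intro i
      rw [abs_le]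
      constructor
      · have := hb v w i; rw [dist_comm w v] at this; linarith
      · have := hb w v i; linarith
    rw [hK, hK]
    have : K v - K v = 0 := sub_self _
    have heq : -∑ i, μ i * univ.inf' univ_nonempty (fun j => c i j - v j)
        - -∑ i, μ i * univ.inf' univ_nonempty (fun j => c i j - w j)
        = ∑ i, μ i * (univ.inf' univ_nonempty (fun j => c i j - w j)
            - univ.inf' univ_nonempty (fun j => c i j - v j)) := by
      simp only [mul_sub, Finset.sum_sub_distrib]; ring
    rw [heq]
    calc |∑ i, μ i * (univ.inf' univ_nonempty (fun j => c i j - w j)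
            - univ.inf' univ_nonempty (fun j => c i j - v j))|
        ≤ ∑ i, |μ i * (univ.inf' univ_nonempty (fun j => c i j - w j)
            - univ.inf' univ_nonempty (fun j => c i j - v j))| :=
          Finset.abs_sum_le_sum_abs _ _
      _ ≤ ∑ i, μ i * dist v w := by
          refine Finset.sum_le_sum fun i _ => ?_
          rw [abs_mul, abs_of_nonneg (hμ0 i)]
          exact mul_le_mul_of_nonneg_left (habs i) (hμ0 i)
      _ = dist v w := by rw [← Finset.sum_mul, hμ1, one_mul]
  · -- duality
    intro ν hν0 hν1
    rw [hMK]
    have hset : {x : ℝ | ∃ v : J → ℝ, x = (∑ j, v j * ν j) - K v}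
        = {x : ℝ | ∃ v : J → ℝ, x = (∑ j, v j * ν j)
            + ∑ i, μ i * univ.inf' univ_nonempty (fun j => c i j - v j)} := by
      ext x
      constructor
      · rintro ⟨v, rfl⟩; exact ⟨v, by rw [hK]; ring⟩
      · rintro ⟨v, rfl⟩; exact ⟨v, by rw [hK]; ring⟩
    rw [hset]
    exact aux_kantorovich μ hμ0 hμ1 c ν hν0 hν1
  · -- unboundedness
    intro ν hν
    rw [not_bddAbove_iff]
    intro x
    by_cases h0 : ∀ j, 0 ≤ ν j
    · -- total mass ≠ 1
      have hs : ∑ j, ν j ≠ 1 := fun h => hν ⟨h0, h⟩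
      set s := ∑ j, ν j with hsdef
      set A := ∑ i, μ i * univ.inf' univ_nonempty (fun j => c i j) with hA
      have hs1 : s - 1 ≠ 0 := sub_ne_zero.mpr hs
      set t := (x + 1 - A) / (s - 1) with ht
      refine ⟨(∑ j, (fun _ : J => t) j * ν j) - K (fun _ => t), ⟨fun _ => t, rfl⟩, ?_⟩
      have hKt : K (fun _ => t) = -(A - t) := by
        rw [hK]
        have : ∀ i ∈ univ, μ i * univ.inf' univ_nonempty (fun j => c i j - t)
            = μ i * univ.inf' univ_nonempty (fun j => c i j) - μ i * t := by
          intro i _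
          rw [aux_inf'_sub_const (fun j => c i j) t, mul_sub]
        rw [Finset.sum_congr rfl this, Finset.sum_sub_distrib, ← Finset.sum_mul, hμ1, one_mul]
      have hsum : ∑ j, (fun _ : J => t) j * ν j = t * s := by
        rw [hsdef, Finset.mul_sum]
      rw [hsum, hKt]
      have : t * s - -(A - t) = t * (s - 1) + A := by ring
      rw [this]
      have : t * (s - 1) = x + 1 - A := by
        rw [ht]; field_simp
      rw [this]; linarith
    · push_neg at h0
      obtain ⟨j0, hj0⟩ := h0
      set A := ∑ i, μ i * univ.inf' univ_nonempty (fun j => c i j) with hA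
      set t := max 0 ((x + 1 - A) / (-ν j0)) with ht
      classical
      set v : J → ℝ := fun j => if j = j0 then -t else 0 with hv
      refine ⟨(∑ j, v j * ν j) - K v, ⟨v, rfl⟩, ?_⟩
      have ht0 : 0 ≤ t := le_max_left _ _
      have hsum : ∑ j, v j * ν j = -t * ν j0 := by
        rw [hv]
        simp [ite_mul, zero_mul, Finset.sum_ite_eq']
      have hKv : K v ≤ -A := by
        rw [hK, neg_le_neg_iff]
        refine Finset.sum_le_sum fun i _ => ?_
        refine mul_le_mul_of_nonneg_left ?_ (hμ0 i)
        have := aux_inf'_le_add (J := J) (fun j => c i j) (fun j => c i j - v j) 0 ?_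
        · linarith [this]
        · intro j
          rw [hv]; dsimp; split
          · linarith
          · linarith
      have hineq : t * (-ν j0) ≥ x + 1 - A := by
        have hpos : 0 < -ν j0 := by linarith
        have : (x + 1 - A) / (-ν j0) ≤ t := le_max_right _ _
        calc x + 1 - A = ((x + 1 - A) / (-ν j0)) * (-ν j0) :=
              (div_mul_cancel₀ _ (ne_of_gt hpos)).symm
        _ ≤ t * (-ν j0) := mul_le_mul_of_nonneg_right this (le_of_lt hpos)
      rw [hsum]
      have : -t * ν j0 = t * (-ν j0) := by ring
      rw [this]
      linarith [hKv, hineq]
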